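/- Let f₁∈C¹[0,1] satisfy f₁(0)=0, f₁'(0)=1, and suppose f₁''(0) exists with f₁''(0)=0. Then the rotationally symmetric metric g = dt² + f₁(t)²dθ² on the punctured disc extends to a C¹ Riemannian metric on the disc 𝔻² with respect to Cartesian coordinates x=t cos θ, y=t sin θ; explicitly, the functions g_xx = 1 + (f₁(t)²/t² − 1)sin²θ, g_yy = 1 + (f₁(t)²/t² − 1)cos²θ, g_xy = 2(f₁(t)²/t² − 1)cos θ sin θ (defined to equal 1,1,0 respectively at the origin) are C¹ on 𝔻². -/

import Mathlib

set_option maxHeartbeats 1000000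

open Set Filter Topology

noncomputable def D (a b : ℝ) : ℝ × ℝ →L[ℝ] ℝ :=
  a • (ContinuousLinearMap.fst ℝ ℝ ℝ) + b • (ContinuousLinearMap.snd ℝ ℝ ℝ)

lemma D_apply (a b : ℝ) (z : ℝ × ℝ) : D a b z = a * z.1 + b * z.2 := by
  simp [D]

lemma D_norm_le (a b : ℝ) : ‖D a b‖ ≤ |a| + |b| := by
  refine ContinuousLinearMap.opNorm_le_bound _ (by positivity) fun z => ?_
  rw [D_apply]
  calc ‖a * z.1 + b * z.2‖ ≤ ‖a * z.1‖ + ‖b * z.2‖ := norm_add_le _ _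
    _ = |a| * ‖z.1‖ + |b| * ‖z.2‖ := by simp [abs_mul, norm_mul]
    _ ≤ |a| * ‖z‖ + |b| * ‖z‖ := by
        gcongr
        exacts [norm_fst_le z, norm_snd_le z]
    _ = (|a| + |b|) * ‖z‖ := by ring

lemma D_cont : Continuous (fun q : ℝ × ℝ => D q.1 q.2) := by
  unfold D
  fun_prop

lemma convex_E : Convex ℝ {p : ℝ × ℝ | p.1 ^ 2 + p.2 ^ 2 ≤ 1} := by
  intro p hp q hq a b ha hb hab
  simp only [mem_setOf_eq] at *
  simp only [Prod.fst_add, Prod.snd_add, Prod.smul_fst, Prod.smul_snd, smul_eq_mul]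
  nlinarith [mul_nonneg (mul_nonneg ha hb) (sq_nonneg (p.1 - q.1)),
    mul_nonneg (mul_nonneg ha hb) (sq_nonneg (p.2 - q.2)),
    mul_le_mul_of_nonneg_left hp ha, mul_le_mul_of_nonneg_left hq hb]

lemma uniqueDiffOn_E : UniqueDiffOn ℝ {p : ℝ × ℝ | p.1 ^ 2 + p.2 ^ 2 ≤ 1} := by
  refine uniqueDiffOn_convex convex_E ⟨0, ?_⟩
  rw [mem_interior]
  refine ⟨Metric.ball 0 (1/2), fun p hp => ?_, Metric.isOpen_ball, by simp⟩
  simp only [Metric.mem_ball, dist_zero_right, Prod.norm_def] at hp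
  have h1 : |p.1| < 1/2 := lt_of_le_of_lt (le_max_left _ _) (by simpa using hp)
  have h2 : |p.2| < 1/2 := lt_of_le_of_lt (le_max_right _ _) (by simpa using hp)
  have := abs_nonneg p.1
  have := abs_nonneg p.2
  simp only [mem_setOf_eq]
  nlinarith [sq_abs p.1, sq_abs p.2]

lemma sfun_pos {p : ℝ × ℝ} (hp : p ≠ 0) : 0 < p.1 ^ 2 + p.2 ^ 2 := by
  have h' : p.1 ≠ 0 ∨ p.2 ≠ 0 := by
    by_contra hc
    push_neg at hc
    exact hp (Prod.ext hc.1 hc.2)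
  rcases h' with h1 | h2
  · positivity
  · positivity

lemma hasFDerivAt_sfun (p : ℝ × ℝ) :
    HasFDerivAt (fun q : ℝ × ℝ => q.1 ^ 2 + q.2 ^ 2) (D (2 * p.1) (2 * p.2)) p := by
  have h1 := (hasFDerivAt_fst (𝕜 := ℝ) (p := p)).mul (hasFDerivAt_fst (𝕜 := ℝ) (p := p))
  have h2 := (hasFDerivAt_snd (𝕜 := ℝ) (p := p)).mul (hasFDerivAt_snd (𝕜 := ℝ) (p := p))
  have h3 := h1.add h2
  have he : (fun q : ℝ × ℝ => q.1 * q.1 + q.2 * q.2) = fun q : ℝ × ℝ => q.1 ^ 2 + q.2 ^ 2 := by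
    funext q; ring
  change HasFDerivAt (fun q : ℝ × ℝ => q.1 * q.1 + q.2 * q.2) _ p at h3
  rw [he] at h3
  refine h3.congr_fderiv ?_
  refine ContinuousLinearMap.ext fun z => ?_
  simp [D]
  ring

theorem key (Ψ Ψ' : ℝ → ℝ)
    (hΨd : ∀ s ∈ Ioc (0:ℝ) 1, HasDerivWithinAt Ψ (Ψ' s) (Ioc 0 1) s)
    (hΨ'c : ContinuousOn Ψ' (Ioc 0 1))
    (lim1 : Tendsto (fun s => Ψ s * Real.sqrt s) (𝓝[>] (0:ℝ)) (𝓝 0))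
    (lim2 : Tendsto (fun s => Ψ' s * (s * Real.sqrt s)) (𝓝[>] (0:ℝ)) (𝓝 0))
    (c : ℝ) (P : ℝ × ℝ → ℝ) (P' : ℝ × ℝ → ℝ × ℝ)
    (hP : ∀ p : ℝ × ℝ, HasFDerivAt P (D (P' p).1 (P' p).2) p)
    (hPb : ∀ p : ℝ × ℝ, |P p| ≤ p.1 ^ 2 + p.2 ^ 2)
    (hP'b : ∀ p : ℝ × ℝ, |(P' p).1| + |(P' p).2| ≤ 4 * Real.sqrt (p.1 ^ 2 + p.2 ^ 2))
    (hP'c : Continuous P')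
    (g : ℝ × ℝ → ℝ) (hg0 : g 0 = c)
    (hg : ∀ p : ℝ × ℝ, p ≠ 0 → g p = c + Ψ (p.1 ^ 2 + p.2 ^ 2) * P p) :
    ContDiffOn ℝ 1 g {p : ℝ × ℝ | p.1 ^ 2 + p.2 ^ 2 ≤ 1} := by
  set E := {p : ℝ × ℝ | p.1 ^ 2 + p.2 ^ 2 ≤ 1} with hEdef
  have hcontsfun : Continuous (fun q : ℝ × ℝ => q.1 ^ 2 + q.2 ^ 2) :=
    (continuous_fst.pow 2).add (continuous_snd.pow 2)
  have hΨc : ContinuousOn Ψ (Ioc 0 1) := fun s hs => (hΨd s hs).continuousWithinAt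
  have hmaps : MapsTo (fun q : ℝ × ℝ => q.1 ^ 2 + q.2 ^ 2) (E \ {0}) (Ioc 0 1) := by
    intro q hq
    exact ⟨sfun_pos (by simpa using hq.2), hq.1⟩
  set G : ℝ × ℝ → (ℝ × ℝ →L[ℝ] ℝ) := fun p =>
    D (Ψ' (p.1 ^ 2 + p.2 ^ 2) * (2 * p.1) * P p + Ψ (p.1 ^ 2 + p.2 ^ 2) * (P' p).1)
      (Ψ' (p.1 ^ 2 + p.2 ^ 2) * (2 * p.2) * P p + Ψ (p.1 ^ 2 + p.2 ^ 2) * (P' p).2) with hGdef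
  have hP'0 : (P' 0).1 = 0 ∧ (P' 0).2 = 0 := by
    have := hP'b 0
    simp only [Prod.fst_zero, Prod.snd_zero] at this
    norm_num [Real.sqrt_zero] at this
    constructor <;> [skip; skip] <;>
      · have h1 := abs_nonneg (P' 0).1
        have h2 := abs_nonneg (P' 0).2
        rw [← abs_eq_zero]
        linarith
  have hG0 : G 0 = 0 := by
    refine ContinuousLinearMap.ext fun z => ?_
    simp [hGdef, D_apply, hP'0.1, hP'0.2]
  have hst : Tendsto (fun q : ℝ × ℝ => q.1 ^ 2 + q.2 ^ 2) (𝓝[E \ {0}] 0) (𝓝[>] 0) := by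
    refine tendsto_nhdsWithin_iff.mpr ⟨?_, ?_⟩
    · have := (hcontsfun.tendsto 0).mono_left (nhdsWithin_le_nhds (s := E \ {0}))
      simpa using this
    · exact eventually_mem_nhdsWithin.mono (fun q hq => sfun_pos (by simpa using hq.2))
  -- norm bound for G away from 0
  have hGbound : ∀ p : ℝ × ℝ, p ≠ 0 → ‖G p‖ ≤
      4 * |Ψ' (p.1 ^ 2 + p.2 ^ 2) * ((p.1 ^ 2 + p.2 ^ 2) * Real.sqrt (p.1 ^ 2 + p.2 ^ 2))|
      + 4 * |Ψ (p.1 ^ 2 + p.2 ^ 2) * Real.sqrt (p.1 ^ 2 + p.2 ^ 2)| := by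
    intro p hp0
    set s := p.1 ^ 2 + p.2 ^ 2 with hs
    have hspos : 0 < s := sfun_pos hp0
    have hx : |p.1| ≤ Real.sqrt s := by
      rw [← Real.sqrt_sq_eq_abs]
      exact Real.sqrt_le_sqrt (by nlinarith [sq_nonneg p.2])
    have hy : |p.2| ≤ Real.sqrt s := by
      rw [← Real.sqrt_sq_eq_abs]
      exact Real.sqrt_le_sqrt (by nlinarith [sq_nonneg p.1])
    have hsqnn : (0:ℝ) ≤ Real.sqrt s := Real.sqrt_nonneg _
    have hPp := hPb p
    have hP'p := hP'b p
    have h1 := D_norm_le (Ψ' s * (2 * p.1) * P p + Ψ s * (P' p).1)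
      (Ψ' s * (2 * p.2) * P p + Ψ s * (P' p).2)
    refine le_trans h1 ?_
    have e1 : |Ψ' s * (2 * p.1) * P p + Ψ s * (P' p).1| ≤
        |Ψ' s| * (2 * |p.1|) * |P p| + |Ψ s| * |(P' p).1| := by
      calc _ ≤ |Ψ' s * (2 * p.1) * P p| + |Ψ s * (P' p).1| := abs_add_le _ _
        _ = |Ψ' s| * (2 * |p.1|) * |P p| + |Ψ s| * |(P' p).1| := by
            rw [abs_mul, abs_mul, abs_mul, abs_mul, abs_two]
    have e2 : |Ψ' s * (2 * p.2) * P p + Ψ s * (P' p).2| ≤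
        |Ψ' s| * (2 * |p.2|) * |P p| + |Ψ s| * |(P' p).2| := by
      calc _ ≤ |Ψ' s * (2 * p.2) * P p| + |Ψ s * (P' p).2| := abs_add_le _ _
        _ = |Ψ' s| * (2 * |p.2|) * |P p| + |Ψ s| * |(P' p).2| := by
            rw [abs_mul, abs_mul, abs_mul, abs_mul, abs_two]
    have habsP : |P p| ≤ s := hPp
    have hΨ'nn := abs_nonneg (Ψ' s)
    have hΨnn := abs_nonneg (Ψ s)
    have hPnn := abs_nonneg (P p)
    have key1 : |Ψ' s| * (2 * |p.1|) * |P p| + |Ψ' s| * (2 * |p.2|) * |P p|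
        ≤ 4 * (|Ψ' s| * (s * Real.sqrt s)) := by
      have hsum : (2 * |p.1|) + (2 * |p.2|) ≤ 4 * Real.sqrt s := by linarith
      have heq1 : |Ψ' s| * (2 * |p.1|) * |P p| + |Ψ' s| * (2 * |p.2|) * |P p|
          = |Ψ' s| * |P p| * ((2 * |p.1|) + (2 * |p.2|)) := by ring
      have heq2 : 4 * (|Ψ' s| * (s * Real.sqrt s)) = |Ψ' s| * s * (4 * Real.sqrt s) := by ring
      rw [heq1, heq2]
      gcongr
    have key2 : |Ψ s| * |(P' p).1| + |Ψ s| * |(P' p).2| ≤ 4 * (|Ψ s| * Real.sqrt s) := by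
      have heq1 : |Ψ s| * |(P' p).1| + |Ψ s| * |(P' p).2|
          = |Ψ s| * (|(P' p).1| + |(P' p).2|) := by ring
      have heq2 : 4 * (|Ψ s| * Real.sqrt s) = |Ψ s| * (4 * Real.sqrt s) := by ring
      rw [heq1, heq2]
      gcongr
    have hfin : 4 * |Ψ' s * (s * Real.sqrt s)| + 4 * |Ψ s * Real.sqrt s|
        = 4 * (|Ψ' s| * (s * Real.sqrt s)) + 4 * (|Ψ s| * Real.sqrt s) := by
      rw [abs_mul, abs_mul, abs_mul, abs_of_nonneg hspos.le, abs_of_nonneg hsqnn]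
    rw [hfin]
    linarith
  -- derivative everywhere within E
  have HasF : ∀ p ∈ E, HasFDerivWithinAt g (G p) E p := by
    intro p hp
    by_cases hp0 : p = 0
    · subst hp0
      rw [hG0, ← hasFDerivWithinAt_diff_singleton 0, hasFDerivWithinAt_iff_tendsto]
      have hb : ∀ᶠ q in 𝓝[E \ {0}] (0 : ℝ × ℝ),
          ‖‖q - 0‖⁻¹ * ‖g q - g 0 - (0 : ℝ × ℝ →L[ℝ] ℝ) (q - 0)‖‖ ≤
          Real.sqrt 2 * |Ψ (q.1 ^ 2 + q.2 ^ 2) * Real.sqrt (q.1 ^ 2 + q.2 ^ 2)| := by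
        refine eventually_mem_nhdsWithin.mono (fun q hq => ?_)
        have hq0 : q ≠ 0 := by simpa using hq.2
        set s := q.1 ^ 2 + q.2 ^ 2 with hsq
        have hspos : 0 < s := sfun_pos hq0
        have hsqrtpos : 0 < Real.sqrt s := Real.sqrt_pos.mpr hspos
        have hgq : g q - g 0 = Ψ s * P q := by rw [hg q hq0, hg0]; ring
        have hnormq : Real.sqrt s ≤ Real.sqrt 2 * ‖q‖ := by
          have h1 : s ≤ 2 * ‖q‖ ^ 2 := by
            have ha : |q.1| ≤ ‖q‖ := norm_fst_le q
            have hb2 : |q.2| ≤ ‖q‖ := norm_snd_le q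
            nlinarith [abs_nonneg q.1, abs_nonneg q.2, sq_abs q.1, sq_abs q.2]
          calc Real.sqrt s ≤ Real.sqrt (2 * ‖q‖ ^ 2) := Real.sqrt_le_sqrt h1
            _ = Real.sqrt 2 * ‖q‖ := by
                rw [Real.sqrt_mul (by norm_num), Real.sqrt_sq (norm_nonneg q)]
        have hqnorm : 0 < ‖q‖ := norm_pos_iff.mpr hq0
        have hnn : (0:ℝ) ≤ ‖q - 0‖⁻¹ * ‖g q - g 0 - (0 : ℝ × ℝ →L[ℝ] ℝ) (q - 0)‖ := by
          positivity
        rw [Real.norm_of_nonneg hnn]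
        simp only [ContinuousLinearMap.zero_apply, map_zero, sub_zero]
        rw [hgq, Real.norm_eq_abs, abs_mul]
        have hPq : |P q| ≤ s := hPb q
        have step : ‖q‖⁻¹ * (|Ψ s| * |P q|) ≤ ‖q‖⁻¹ * (|Ψ s| * s) := by gcongr
        refine le_trans step ?_
        have hsqrtpos : 0 < Real.sqrt s := Real.sqrt_pos.mpr hspos
        have hinv : ‖q‖⁻¹ ≤ Real.sqrt 2 / Real.sqrt s := by
          rw [inv_eq_one_div, div_le_div_iff₀ hqnorm hsqrtpos]
          rw [one_mul]
          linarith [hnormq]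
        calc ‖q‖⁻¹ * (|Ψ s| * s) ≤ (Real.sqrt 2 / Real.sqrt s) * (|Ψ s| * s) :=
              mul_le_mul_of_nonneg_right hinv (by positivity)
          _ = Real.sqrt 2 * (|Ψ s| * (s / Real.sqrt s)) := by ring
          _ = Real.sqrt 2 * (|Ψ s| * Real.sqrt s) := by rw [Real.div_sqrt]
          _ = Real.sqrt 2 * |Ψ s * Real.sqrt s| := by
              rw [abs_mul, abs_of_nonneg hsqrtpos.le]
      refine squeeze_zero_norm' hb ?_
      have h0 := ((lim1.comp hst).abs).const_mul (Real.sqrt 2)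
      simpa using h0
    · -- nonzero point
      have hs0 : p.1 ^ 2 + p.2 ^ 2 ∈ Ioc (0:ℝ) 1 := ⟨sfun_pos hp0, hp⟩
      have hsf : HasFDerivWithinAt (fun q : ℝ × ℝ => q.1 ^ 2 + q.2 ^ 2)
          (D (2 * p.1) (2 * p.2)) (E \ {0}) p := (hasFDerivAt_sfun p).hasFDerivWithinAt
      have hcomp := (hΨd _ hs0).comp_hasFDerivWithinAt p hsf hmaps
      have hmul := hcomp.mul ((hP p).hasFDerivWithinAt (s := E \ {0}))
      have hadd := hmul.const_add c
      have hcongr : HasFDerivWithinAt g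
          ((Ψ ∘ fun q : ℝ × ℝ => q.1 ^ 2 + q.2 ^ 2) p • D (P' p).1 (P' p).2 +
            P p • Ψ' (p.1 ^ 2 + p.2 ^ 2) • D (2 * p.1) (2 * p.2)) (E \ {0}) p := by
        refine hadd.congr (fun q hq => ?_) ?_
        · rw [hg q (by simpa using hq.2)]
          rfl
        · rw [hg p hp0]
          rfl
      have heq : ((Ψ ∘ fun q : ℝ × ℝ => q.1 ^ 2 + q.2 ^ 2) p • D (P' p).1 (P' p).2 +
            P p • Ψ' (p.1 ^ 2 + p.2 ^ 2) • D (2 * p.1) (2 * p.2)) = G p := by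
        refine ContinuousLinearMap.ext fun z => ?_
        simp [hGdef, D_apply, Function.comp]
        ring
      rw [heq] at hcongr
      have hmem : E \ {0} ∈ 𝓝[E] p :=
        inter_mem_nhdsWithin E (isOpen_compl_singleton.mem_nhds (by simpa using hp0))
      exact hcongr.mono_of_mem_nhdsWithin hmem
  -- continuity of G on E
  have hGcont : ContinuousOn G E := by
    intro p hp
    by_cases hp0 : p = 0
    · subst hp0
      rw [← continuousWithinAt_diff_self]
      have : Tendsto G (𝓝[E \ {0}] 0) (𝓝 0) := by
        refine squeeze_zero_norm' (a := fun q : ℝ × ℝ =>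
            4 * |Ψ' (q.1 ^ 2 + q.2 ^ 2) * ((q.1 ^ 2 + q.2 ^ 2) * Real.sqrt (q.1 ^ 2 + q.2 ^ 2))| +
            4 * |Ψ (q.1 ^ 2 + q.2 ^ 2) * Real.sqrt (q.1 ^ 2 + q.2 ^ 2)|) ?_ ?_
        · exact eventually_mem_nhdsWithin.mono (fun q hq => hGbound q (by simpa using hq.2))
        · have h1 := ((lim2.comp hst).abs).const_mul (4:ℝ)
          have h2 := ((lim1.comp hst).abs).const_mul (4:ℝ)
          have := h1.add h2
          simpa using this
      unfold ContinuousWithinAt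
      rw [hG0]
      exact this
    · have hsub : ContinuousOn G (E \ {0}) := by
        have hΨs : ContinuousOn (fun q : ℝ × ℝ => Ψ (q.1 ^ 2 + q.2 ^ 2)) (E \ {0}) :=
          hΨc.comp hcontsfun.continuousOn hmaps
        have hΨ's : ContinuousOn (fun q : ℝ × ℝ => Ψ' (q.1 ^ 2 + q.2 ^ 2)) (E \ {0}) :=
          hΨ'c.comp hcontsfun.continuousOn hmaps
        have hPcont : Continuous P := by
          rw [continuous_iff_continuousAt]
          exact fun q => (hP q).continuousAt
        have hA : ContinuousOn (fun q : ℝ × ℝ =>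
            Ψ' (q.1 ^ 2 + q.2 ^ 2) * (2 * q.1) * P q + Ψ (q.1 ^ 2 + q.2 ^ 2) * (P' q).1)
            (E \ {0}) := by
          exact ((hΨ's.mul ((continuous_const.mul continuous_fst).continuousOn)).mul
            hPcont.continuousOn).add (hΨs.mul (hP'c.fst.continuousOn))
        have hB : ContinuousOn (fun q : ℝ × ℝ =>
            Ψ' (q.1 ^ 2 + q.2 ^ 2) * (2 * q.2) * P q + Ψ (q.1 ^ 2 + q.2 ^ 2) * (P' q).2)
            (E \ {0}) := by
          exact ((hΨ's.mul ((continuous_const.mul continuous_snd).continuousOn)).mul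
            hPcont.continuousOn).add (hΨs.mul (hP'c.snd.continuousOn))
        exact D_cont.comp_continuousOn (hA.prodMk hB)
      have hmem : E \ {0} ∈ 𝓝[E] p :=
        inter_mem_nhdsWithin E (isOpen_compl_singleton.mem_nhds (by simpa using hp0))
      exact (hsub p ⟨hp, by simpa using hp0⟩).mono_of_mem_nhdsWithin hmem
  have hdiff : DifferentiableOn ℝ g E := fun p hp => (HasF p hp).differentiableWithinAt
  have hfeq : EqOn (fderivWithin ℝ g E) G E := fun p hp =>
    (HasF p hp).fderivWithin (uniqueDiffOn_E p hp)
  have h10 : (1 : WithTop ℕ∞) = 0 + 1 := by norm_num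
  rw [h10]
  refine (contDiffOn_succ_iff_fderivWithin uniqueDiffOn_E).mpr ⟨hdiff, by simp, ?_⟩
  rw [contDiffOn_zero]
  exact hGcont.congr hfeq

/-- C¹ regularity of the rotationally symmetric metric dt² + f₁(t)²dθ² on the disc in
Cartesian coordinates: with t = √(x²+y²), the components
g_xx = 1 + (f₁(t)²/t² − 1)sin²θ, g_yy = 1 + (f₁(t)²/t² − 1)cos²θ,
g_xy = 2(f₁(t)²/t² − 1)cosθ sinθ (equal to 1,1,0 at the origin) are C¹ on 𝔻². -/
theorem stmt3 (f₁ : ℝ → ℝ)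
    (hf₁ : ContDiffOn ℝ 1 f₁ (Icc 0 1))
    (hf₁0 : f₁ 0 = 0)
    (hf₁'0 : derivWithin f₁ (Icc 0 1) 0 = 1)
    (hf₁''0 : HasDerivWithinAt (derivWithin f₁ (Icc 0 1)) 0 (Icc 0 1) 0)
    (gxx gyy gxy : ℝ × ℝ → ℝ)
    (hgxx : ∀ p : ℝ × ℝ, p ≠ 0 → gxx p =
      1 + ((f₁ (Real.sqrt (p.1 ^ 2 + p.2 ^ 2))) ^ 2 / (p.1 ^ 2 + p.2 ^ 2) - 1) *
        (p.2 ^ 2 / (p.1 ^ 2 + p.2 ^ 2)))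
    (hgyy : ∀ p : ℝ × ℝ, p ≠ 0 → gyy p =
      1 + ((f₁ (Real.sqrt (p.1 ^ 2 + p.2 ^ 2))) ^ 2 / (p.1 ^ 2 + p.2 ^ 2) - 1) *
        (p.1 ^ 2 / (p.1 ^ 2 + p.2 ^ 2)))
    (hgxy : ∀ p : ℝ × ℝ, p ≠ 0 → gxy p =
      2 * ((f₁ (Real.sqrt (p.1 ^ 2 + p.2 ^ 2))) ^ 2 / (p.1 ^ 2 + p.2 ^ 2) - 1) *
        (p.1 * p.2 / (p.1 ^ 2 + p.2 ^ 2)))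
    (hgxx0 : gxx 0 = 1) (hgyy0 : gyy 0 = 1) (hgxy0 : gxy 0 = 0) :
    ContDiffOn ℝ 1 gxx {p : ℝ × ℝ | p.1 ^ 2 + p.2 ^ 2 ≤ 1} ∧
    ContDiffOn ℝ 1 gyy {p : ℝ × ℝ | p.1 ^ 2 + p.2 ^ 2 ≤ 1} ∧
    ContDiffOn ℝ 1 gxy {p : ℝ × ℝ | p.1 ^ 2 + p.2 ^ 2 ≤ 1} := by
  have one_le : (1:ℝ) ≤ 1 := le_rfl
  set f' : ℝ → ℝ := derivWithin f₁ (Icc 0 1) with hf'def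
  have uD : UniqueDiffOn ℝ (Icc (0:ℝ) 1) := uniqueDiffOn_Icc one_pos
  have hf'cont : ContinuousOn f' (Icc 0 1) := hf₁.continuousOn_derivWithin uD le_rfl
  have hdAt : ∀ t ∈ Ioo (0:ℝ) 1, HasDerivAt f₁ (f' t) t := by
    intro t ht
    have hmem : Icc (0:ℝ) 1 ∈ 𝓝 t := Icc_mem_nhds ht.1 ht.2
    have hd := (hf₁.differentiableOn one_ne_zero t (Ioo_subset_Icc_self ht)).differentiableAt hmem
    have he : f' t = deriv f₁ t := derivWithin_of_mem_nhds hmem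
    rw [he]; exact hd.hasDerivAt
  have hfilter : 𝓝[>] (0:ℝ) ≤ 𝓝[Icc (0:ℝ) 1 \ {0}] 0 := by
    rw [← nhdsWithin_Ioo_eq_nhdsGT (by norm_num : (0:ℝ) < 1)]
    exact nhdsWithin_mono 0 (fun t ht => ⟨⟨ht.1.le, ht.2.le⟩, by simp [ne_of_gt ht.1]⟩)
  have hd0 : HasDerivWithinAt f₁ 1 (Icc 0 1) 0 := by
    have h := (hf₁.differentiableOn one_ne_zero 0 (by norm_num [mem_Icc])).hasDerivWithinAt
    rwa [← hf'def, hf₁'0] at h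
  have h1 : Tendsto (fun t => f₁ t / t) (𝓝[>] (0:ℝ)) (𝓝 1) := by
    have h := (hasDerivWithinAt_iff_tendsto_slope.mp hd0).mono_left hfilter
    refine h.congr' ?_
    filter_upwards [self_mem_nhdsWithin] with t ht
    simp [slope_def_field, hf₁0]
  have h2 : Tendsto (fun t => (f' t - 1) / t) (𝓝[>] (0:ℝ)) (𝓝 0) := by
    have h := (hasDerivWithinAt_iff_tendsto_slope.mp hf₁''0).mono_left hfilter
    refine h.congr' ?_
    filter_upwards [self_mem_nhdsWithin] with t ht
    simp [slope_def_field, hf₁'0]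
  have hf₁0t : Tendsto f₁ (𝓝[>] (0:ℝ)) (𝓝 0) := by
    have h := hd0.continuousWithinAt
    unfold ContinuousWithinAt at h
    rw [hf₁0] at h
    exact h.mono_left (le_trans hfilter (nhdsWithin_mono 0 diff_subset))
  have hidt : Tendsto (fun t : ℝ => t) (𝓝[>] (0:ℝ)) (𝓝 0) := by
    have := (continuous_id.tendsto (0:ℝ)).mono_left (nhdsWithin_le_nhds (s := Ioi 0))
    exact this
  have h3 : Tendsto (fun t => (f₁ t - t) / t ^ 2) (𝓝[>] (0:ℝ)) (𝓝 0) := by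
    have hIoo : Ioo (0:ℝ) 1 ∈ 𝓝[>] (0:ℝ) := Ioo_mem_nhdsGT one_pos
    refine HasDerivAt.lhopital_zero_nhdsGT (f' := fun t => f' t - 1)
      (g' := fun t => 2 * t) ?_ ?_ ?_ ?_ ?_ ?_
    · filter_upwards [hIoo] with t ht
      exact (hdAt t ht).sub (hasDerivAt_id t)
    · filter_upwards [hIoo] with t ht
      simpa using (hasDerivAt_pow 2 t)
    · filter_upwards [hIoo] with t ht
      have : (0:ℝ) < t := ht.1
      positivity
    · have := hf₁0t.sub hidt
      simpa using this
    · have hm := hidt.mul hidt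
      have h2' : Tendsto (fun t : ℝ => t ^ 2) (𝓝[>] (0:ℝ)) (𝓝 (0 * 0)) := by
        refine hm.congr fun t => ?_
        ring
      simpa using h2'
    · have h := h2.div_const 2
      have h' : Tendsto (fun x => (f' x - 1) / (2 * x)) (𝓝[>] (0:ℝ)) (𝓝 (0 / 2)) := by
        refine h.congr fun x => ?_
        rw [div_div, mul_comm]
      simpa using h'
  have h4 : Tendsto (fun t => (f₁ t * f' t - t) / t ^ 2) (𝓝[>] (0:ℝ)) (𝓝 0) := by
    have h := (h1.mul h2).add h3
    have h' : Tendsto (fun t => f₁ t / t * ((f' t - 1) / t) + (f₁ t - t) / t ^ 2)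
        (𝓝[>] (0:ℝ)) (𝓝 0) := by simpa using h
    refine h'.congr' ?_
    filter_upwards [self_mem_nhdsWithin] with t ht
    have ht0 : t ≠ 0 := ne_of_gt ht
    field_simp
    ring
  have h5 : Tendsto (fun t => ((f₁ t) ^ 2 - t ^ 2) / t ^ 3) (𝓝[>] (0:ℝ)) (𝓝 0) := by
    have hc : Tendsto (fun _ : ℝ => (1:ℝ)) (𝓝[>] (0:ℝ)) (𝓝 1) := tendsto_const_nhds
    have h := h3.mul (h1.add hc)
    have h' : Tendsto (fun t => (f₁ t - t) / t ^ 2 * (f₁ t / t + 1)) (𝓝[>] (0:ℝ)) (𝓝 0) := by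
      simpa using h
    refine h'.congr' ?_
    filter_upwards [self_mem_nhdsWithin] with t ht
    have ht0 : t ≠ 0 := ne_of_gt ht
    field_simp
    ring
  have h6 : Tendsto (fun t => (f₁ t * f' t - t) / t ^ 2 - 2 * (((f₁ t) ^ 2 - t ^ 2) / t ^ 3))
      (𝓝[>] (0:ℝ)) (𝓝 0) := by
    have h := h4.sub ((h5.const_mul 2))
    simpa using h
  set Ψ : ℝ → ℝ := fun s => ((f₁ (Real.sqrt s)) ^ 2 - s) / s ^ 2 with hΨdef
  set Ψ' : ℝ → ℝ := fun s =>
    ((2 * f₁ (Real.sqrt s) * f' (Real.sqrt s) * (1 / (2 * Real.sqrt s)) - 1) * s ^ 2 -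
      ((f₁ (Real.sqrt s)) ^ 2 - s) * (2 * s)) / (s ^ 2) ^ 2 with hΨ'def
  have hmapsIcc : MapsTo Real.sqrt (Ioc 0 1) (Icc 0 1) :=
    fun u hu => ⟨Real.sqrt_nonneg u, Real.sqrt_le_one.mpr hu.2⟩
  have hΨd : ∀ s ∈ Ioc (0:ℝ) 1, HasDerivWithinAt Ψ (Ψ' s) (Ioc 0 1) s := by
    intro s hs
    have hspos : 0 < s := hs.1
    have htpos : 0 < Real.sqrt s := Real.sqrt_pos.mpr hspos
    have ht1 : Real.sqrt s ≤ 1 := Real.sqrt_le_one.mpr hs.2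
    have hsq : HasDerivWithinAt Real.sqrt (1 / (2 * Real.sqrt s)) (Ioc 0 1) s :=
      (Real.hasDerivAt_sqrt (ne_of_gt hspos)).hasDerivWithinAt
    have hfd : HasDerivWithinAt f₁ (f' (Real.sqrt s)) (Icc 0 1) (Real.sqrt s) :=
      (hf₁.differentiableOn one_ne_zero _ ⟨htpos.le, ht1⟩).hasDerivWithinAt
    have hcomp := hfd.comp s hsq hmapsIcc
    have hF : HasDerivWithinAt (fun u => (f₁ (Real.sqrt u)) ^ 2)
        (2 * f₁ (Real.sqrt s) * f' (Real.sqrt s) * (1 / (2 * Real.sqrt s))) (Ioc 0 1) s := by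
      have h := hcomp.pow 2
      simp only [Function.comp] at h
      change HasDerivWithinAt (fun u => (f₁ (Real.sqrt u)) ^ 2) _ (Ioc 0 1) s at h
      convert h using 1 <;> try ring
    have hnum := hF.sub (hasDerivWithinAt_id s (Ioc 0 1))
    have hden : HasDerivWithinAt (fun u : ℝ => u ^ 2) (2 * s) (Ioc 0 1) s := by
      simpa using (hasDerivAt_pow 2 s).hasDerivWithinAt
    have hdiv := hnum.div hden (by positivity)
    convert hdiv using 1
    all_goals rfl
  have hΨ'c : ContinuousOn Ψ' (Ioc 0 1) := by
    have hsqc : ContinuousOn Real.sqrt (Ioc (0:ℝ) 1) := Real.continuous_sqrt.continuousOn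
    have hf₁c : ContinuousOn (fun u => f₁ (Real.sqrt u)) (Ioc 0 1) :=
      (hf₁.continuousOn).comp hsqc hmapsIcc
    have hf'c : ContinuousOn (fun u => f' (Real.sqrt u)) (Ioc 0 1) :=
      hf'cont.comp hsqc hmapsIcc
    refine ContinuousOn.div ?_ ?_ ?_
    · refine ContinuousOn.sub ?_ ?_
      · refine ContinuousOn.mul ?_ (by fun_prop)
        refine ContinuousOn.sub ?_ continuousOn_const
        refine ContinuousOn.mul ?_ ?_
        · exact ((continuousOn_const.mul hf₁c).mul hf'c)
        · refine ContinuousOn.div continuousOn_const (by fun_prop) ?_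
          intro u hu
          have : 0 < Real.sqrt u := Real.sqrt_pos.mpr hu.1
          positivity
      · refine ContinuousOn.mul ?_ (by fun_prop)
        exact (hf₁c.pow 2).sub continuousOn_id
    · fun_prop
    · intro u hu
      have : (0:ℝ) < u := hu.1
      positivity
  have hsq0 : Tendsto Real.sqrt (𝓝[>] (0:ℝ)) (𝓝[>] 0) := by
    refine tendsto_nhdsWithin_iff.mpr ⟨?_, ?_⟩
    · have := (Real.continuous_sqrt.tendsto 0).mono_left (nhdsWithin_le_nhds (s := Ioi 0))
      simpa using this
    · filter_upwards [self_mem_nhdsWithin] with u hu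
      exact Real.sqrt_pos.mpr hu
  have lim1 : Tendsto (fun s => Ψ s * Real.sqrt s) (𝓝[>] (0:ℝ)) (𝓝 0) := by
    have h := h5.comp hsq0
    refine h.congr' ?_
    filter_upwards [self_mem_nhdsWithin] with u hu
    have hu0 : (0:ℝ) < u := hu
    obtain ⟨t, htp, rfl⟩ : ∃ t : ℝ, 0 < t ∧ t ^ 2 = u :=
      ⟨Real.sqrt u, Real.sqrt_pos.mpr hu0, Real.sq_sqrt hu0.le⟩
    have ht0 : t ≠ 0 := ne_of_gt htp
    simp only [Function.comp, hΨdef]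
    rw [Real.sqrt_sq htp.le]
    field_simp
  have lim2 : Tendsto (fun s => Ψ' s * (s * Real.sqrt s)) (𝓝[>] (0:ℝ)) (𝓝 0) := by
    have h := h6.comp hsq0
    refine h.congr' ?_
    filter_upwards [self_mem_nhdsWithin] with u hu
    have hu0 : (0:ℝ) < u := hu
    obtain ⟨t, htp, rfl⟩ : ∃ t : ℝ, 0 < t ∧ t ^ 2 = u :=
      ⟨Real.sqrt u, Real.sqrt_pos.mpr hu0, Real.sq_sqrt hu0.le⟩
    have ht0 : t ≠ 0 := ne_of_gt htp
    simp only [Function.comp, hΨ'def]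
    rw [Real.sqrt_sq htp.le]
    field_simp
  refine ⟨?_, ?_, ?_⟩
  · refine key Ψ Ψ' hΨd hΨ'c lim1 lim2 1 (fun p => p.2 ^ 2) (fun p => (0, 2 * p.2))
      ?_ ?_ ?_ (by fun_prop) gxx hgxx0 ?_
    · intro p
      have h := (hasFDerivAt_snd (𝕜 := ℝ) (p := p)).mul (hasFDerivAt_snd (𝕜 := ℝ) (p := p))
      have he : (fun q : ℝ × ℝ => q.2 * q.2) = fun q : ℝ × ℝ => q.2 ^ 2 := by
        funext q; ring
      change HasFDerivAt (fun q : ℝ × ℝ => q.2 * q.2) _ p at h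
      rw [he] at h
      refine h.congr_fderiv ?_
      refine ContinuousLinearMap.ext fun z => ?_
      simp [D_apply]
      ring
    · intro p
      rw [abs_of_nonneg (sq_nonneg _)]
      show p.2 ^ 2 ≤ p.1 ^ 2 + p.2 ^ 2
      nlinarith [sq_nonneg p.1]
    · intro p
      have hy : |p.2| ≤ Real.sqrt (p.1 ^ 2 + p.2 ^ 2) := by
        rw [← Real.sqrt_sq_eq_abs]
        exact Real.sqrt_le_sqrt (by nlinarith [sq_nonneg p.1])
      have h2 : |2 * p.2| = 2 * |p.2| := by rw [abs_mul, abs_two]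
      simp only [abs_zero]
      rw [h2]
      linarith [abs_nonneg p.2, Real.sqrt_nonneg (p.1 ^ 2 + p.2 ^ 2)]
    · intro p hp
      rw [hgxx p hp]
      have hs : (0:ℝ) < p.1 ^ 2 + p.2 ^ 2 := sfun_pos hp
      simp only [hΨdef]
      field_simp
  · refine key Ψ Ψ' hΨd hΨ'c lim1 lim2 1 (fun p => p.1 ^ 2) (fun p => (2 * p.1, 0))
      ?_ ?_ ?_ (by fun_prop) gyy hgyy0 ?_
    · intro p
      have h := (hasFDerivAt_fst (𝕜 := ℝ) (p := p)).mul (hasFDerivAt_fst (𝕜 := ℝ) (p := p))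
      have he : (fun q : ℝ × ℝ => q.1 * q.1) = fun q : ℝ × ℝ => q.1 ^ 2 := by
        funext q; ring
      change HasFDerivAt (fun q : ℝ × ℝ => q.1 * q.1) _ p at h
      rw [he] at h
      refine h.congr_fderiv ?_
      refine ContinuousLinearMap.ext fun z => ?_
      simp [D_apply]
      ring
    · intro p
      rw [abs_of_nonneg (sq_nonneg _)]
      show p.1 ^ 2 ≤ p.1 ^ 2 + p.2 ^ 2
      nlinarith [sq_nonneg p.2]
    · intro p
      have hx : |p.1| ≤ Real.sqrt (p.1 ^ 2 + p.2 ^ 2) := by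
        rw [← Real.sqrt_sq_eq_abs]
        exact Real.sqrt_le_sqrt (by nlinarith [sq_nonneg p.2])
      have h2 : |2 * p.1| = 2 * |p.1| := by rw [abs_mul, abs_two]
      simp only [abs_zero]
      rw [h2]
      linarith [abs_nonneg p.1, Real.sqrt_nonneg (p.1 ^ 2 + p.2 ^ 2)]
    · intro p hp
      rw [hgyy p hp]
      have hs : (0:ℝ) < p.1 ^ 2 + p.2 ^ 2 := sfun_pos hp
      simp only [hΨdef]
      field_simp
  · refine key Ψ Ψ' hΨd hΨ'c lim1 lim2 0 (fun p => 2 * (p.1 * p.2))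
      (fun p => (2 * p.2, 2 * p.1)) ?_ ?_ ?_ (by fun_prop) gxy hgxy0 ?_
    · intro p
      have h := ((hasFDerivAt_fst (𝕜 := ℝ) (p := p)).mul
        (hasFDerivAt_snd (𝕜 := ℝ) (p := p))).const_mul 2
      change HasFDerivAt (fun q : ℝ × ℝ => 2 * (q.1 * q.2)) _ p at h
      refine h.congr_fderiv ?_
      refine ContinuousLinearMap.ext fun z => ?_
      simp [D_apply]
      ring
    · intro p
      have habs := abs_mul (2 : ℝ) (p.1 * p.2)
      rw [habs, abs_two, abs_mul]
      nlinarith [sq_nonneg (|p.1| - |p.2|), abs_nonneg p.1, abs_nonneg p.2,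
        sq_abs p.1, sq_abs p.2]
    · intro p
      have hx : |p.1| ≤ Real.sqrt (p.1 ^ 2 + p.2 ^ 2) := by
        rw [← Real.sqrt_sq_eq_abs]
        exact Real.sqrt_le_sqrt (by nlinarith [sq_nonneg p.2])
      have hy : |p.2| ≤ Real.sqrt (p.1 ^ 2 + p.2 ^ 2) := by
        rw [← Real.sqrt_sq_eq_abs]
        exact Real.sqrt_le_sqrt (by nlinarith [sq_nonneg p.1])
      have e1 : |2 * p.2| = 2 * |p.2| := by rw [abs_mul, abs_two]
      have e2 : |2 * p.1| = 2 * |p.1| := by rw [abs_mul, abs_two]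
      rw [e1, e2]
      linarith
    · intro p hp
      rw [hgxy p hp]
      have hs : (0:ℝ) < p.1 ^ 2 + p.2 ^ 2 := sfun_pos hp
      simp only [hΨdef]
      field_simp
      ring
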